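/- arXiv:0909.5664 — 7 statements merged into one kernel-verified Lean document; each statement's English description precedes it below -/
import Mathlib

section
/- Let A and B be finite subsets of a group G such that A ∩ B⁻¹ = {1} (where B⁻¹ = {b⁻¹ : b ∈ B}) and both A and B contain 1. Then |AB| ≥ |A| + |B| − 1. -/
open Set Pointwise

variable {V : Type*}

/-- Image of a set under the relation. -/
def img (Γ : V → Set V) (F : Set V) : Set V := ⋃ x ∈ F, Γ x
/-- Reverse relation. -/
def rev (Γ : V → Set V) : V → Set V := fun y => {x | y ∈ Γ x}
/-- Boundary ∂(F) = Γ(F) \ F. -/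
def bd (Γ : V → Set V) (F : Set V) : Set V := img Γ F \ F
/-- ∇(F) = V \ (F ∪ Γ(F)). -/
def nab (Γ : V → Set V) (F : Set V) : Set V := (F ∪ img Γ F)ᶜ
/-- Reflexive relation. -/
def Refl (Γ : V → Set V) : Prop := ∀ x, x ∈ Γ x
/-- Locally finite relation. -/
def LocFin (Γ : V → Set V) : Prop := ∀ x, (Γ x).Finite
/-- Automorphism of the relation. -/
def IsAuto (Γ : V → Set V) (φ : V ≃ V) : Prop := ∀ x, Γ (φ x) = φ '' Γ x
/-- Vertex-transitivity. -/
def VT (Γ : V → Set V) : Prop := ∀ x y : V, ∃ φ : V ≃ V, IsAuto Γ φ ∧ φ x = y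
/-- A finite v-Moser set. -/
def MoserSet (Γ : V → Set V) (v : V) (F : Set V) : Prop :=
  F.Finite ∧ v ∈ F ∧ rev Γ v ∩ F = {v}
/-- μ(v): minimum boundary size over v-Moser sets. -/
noncomputable def mu (Γ : V → Set V) (v : V) : ℕ :=
  sInf {n | ∃ F, MoserSet Γ v F ∧ (bd Γ F).ncard = n}
/-- A v-molecule: Moser set of minimum boundary. -/
def Molecule (Γ : V → Set V) (v : V) (F : Set V) : Prop :=
  MoserSet Γ v F ∧ (bd Γ F).ncard = mu Γ v
/-- The v-kernel: the unique minimal v-molecule. -/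
def IsKernel (Γ : V → Set V) (v : V) (K : Set V) : Prop :=
  Molecule Γ v K ∧ ∀ F, Molecule Γ v F → K ⊆ F
/-- Weak connectivity κ₀. -/
noncomputable def kappa0 (Γ : V → Set V) : ℕ :=
  sInf {n | ∃ X : Set V, X.Finite ∧ X.Nonempty ∧ (bd Γ X).ncard = n}
/-- Weak fragment. -/
def WeakFragment (Γ : V → Set V) (X : Set V) : Prop :=
  X.Finite ∧ X.Nonempty ∧ (bd Γ X).ncard = kappa0 Γ
/-- Weak atom: a weak fragment of minimum cardinality. -/
def WeakAtom (Γ : V → Set V) (X : Set V) : Prop :=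
  WeakFragment Γ X ∧ ∀ Y, WeakFragment Γ Y → X.ncard ≤ Y.ncard

open Finset Function MulOpposite
open scoped Pointwise

namespace SKproof

variable {α : Type*} [Group α] [DecidableEq α] {x y : Finset α × Finset α} {s t : Finset α}

lemma mem_c_smul_inv (c y : α) (t : Finset α) : y ∈ c • t⁻¹ ↔ y⁻¹ * c ∈ t := by
  rw [← Finset.inv_smul_mem_iff, Finset.mem_inv', smul_eq_mul, mul_inv_rev, inv_inv]

lemma mem_op_smul' (g y : α) (s : Finset α) : y ∈ op g • s ↔ y * g⁻¹ ∈ s := by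
  rw [← Finset.inv_smul_mem_iff]
  simp [op_smul_eq_mul]

lemma mem_inv_smul' (g y : α) (t : Finset α) : y ∈ g⁻¹ • t ↔ g * y ∈ t := by
  rw [Finset.mem_inv_smul_finset_iff]; rfl

/-- DeVos's induction relation (same as in mathlib's CauchyDavenport). -/
def DevosMulRel : Finset α × Finset α → Finset α × Finset α → Prop :=
  Prod.Lex (· < ·) (Prod.Lex (· > ·) (· < ·)) on fun x ↦ (#(x.1 * x.2), #x.1 + #x.2, #x.1)

lemma devosMulRel_iff :
    DevosMulRel x y ↔
      #(x.1 * x.2) < #(y.1 * y.2) ∨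
        #(x.1 * x.2) = #(y.1 * y.2) ∧ #y.1 + #y.2 < #x.1 + #x.2 ∨
          #(x.1 * x.2) = #(y.1 * y.2) ∧ #x.1 + #x.2 = #y.1 + #y.2 ∧ #x.1 < #y.1 := by
  simp [DevosMulRel, Prod.lex_iff, and_or_left]

lemma devosMulRel_of_le (mul : #(x.1 * x.2) ≤ #(y.1 * y.2))
    (hadd : #y.1 + #y.2 < #x.1 + #x.2) : DevosMulRel x y :=
  devosMulRel_iff.2 <| mul.lt_or_eq.imp_right fun h ↦ Or.inl ⟨h, hadd⟩

lemma devosMulRel_of_le_of_le (mul : #(x.1 * x.2) ≤ #(y.1 * y.2))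
    (hadd : #y.1 + #y.2 ≤ #x.1 + #x.2) (hone : #x.1 < #y.1) : DevosMulRel x y :=
  devosMulRel_iff.2 <|
    mul.lt_or_eq.imp_right fun h ↦ (lt_or_eq_of_le hadd).imp (And.intro h) fun h' ↦ ⟨h, h'.symm, hone⟩

lemma wellFoundedOn_devosMulRel :
    {x : Finset α × Finset α | x.1.Nonempty ∧ x.2.Nonempty}.WellFoundedOn
      (DevosMulRel : Finset α × Finset α → Finset α × Finset α → Prop) := by
  refine wellFounded_lt.onFun.wellFoundedOn.prod_lex_of_wellFoundedOn_fiber fun n ↦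
    Set.WellFoundedOn.prod_lex_of_wellFoundedOn_fiber ?_ fun n ↦
      wellFounded_lt.onFun.wellFoundedOn
  exact wellFounded_lt.onFun.wellFoundedOn.mono' fun x hx y _ ↦ tsub_lt_tsub_left_of_le <|
    add_le_add ((card_le_card_mul_right hx.1.2).trans_eq hx.2) <|
      (card_le_card_mul_left hx.1.1).trans_eq hx.2

/-- Kemperman's unique-representation theorem: if `c` has exactly one representation
`c = a * b` with `a ∈ s`, `b ∈ t`, then `|s * t| ≥ |s| + |t| - 1`. -/
theorem kemperman_core :
    ∀ (s t : Finset α) (a c : α), s ∩ (c • t⁻¹) = {a} → #s + #t ≤ #(s * t) + 1 := by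
  suffices H : ∀ x : Finset α × Finset α, x ∈ {x : Finset α × Finset α | x.1.Nonempty ∧ x.2.Nonempty} →
      ∀ a c : α, x.1 ∩ (c • x.2⁻¹) = {a} → #x.1 + #x.2 ≤ #(x.1 * x.2) + 1 by
    intro s t a c hrep
    have ha' : a ∈ s ∩ (c • t⁻¹) := by rw [hrep]; exact Finset.mem_singleton_self a
    rw [Finset.mem_inter] at ha'
    have hbt : a⁻¹ * c ∈ t := (mem_c_smul_inv c a t).1 ha'.2
    exact H (s, t) ⟨⟨a, ha'.1⟩, ⟨_, hbt⟩⟩ a c hrep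
  intro x hx
  refine wellFoundedOn_devosMulRel.induction (P := fun x : Finset α × Finset α =>
    ∀ a c : α, x.1 ∩ (c • x.2⁻¹) = {a} → #x.1 + #x.2 ≤ #(x.1 * x.2) + 1) hx ?_
  clear hx x
  rintro ⟨s, t⟩ hst ih a c hrep
  simp only [Set.mem_setOf_eq] at hst
  simp only at ih hrep ⊢
  -- basic facts
  have uniq : ∀ y : α, y ∈ s → y⁻¹ * c ∈ t → y = a := by
    intro y hy hy'
    have : y ∈ s ∩ (c • t⁻¹) := Finset.mem_inter.2 ⟨hy, (mem_c_smul_inv c y t).2 hy'⟩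
    rw [hrep, Finset.mem_singleton] at this; exact this
  have ha' : a ∈ s ∩ (c • t⁻¹) := by rw [hrep]; exact Finset.mem_singleton_self a
  rw [Finset.mem_inter] at ha'
  have has : a ∈ s := ha'.1
  set b := a⁻¹ * c with hb
  have hbt : b ∈ t := (mem_c_smul_inv c a t).1 ha'.2
  have hc : c = a * b := by rw [hb, mul_inv_cancel_left]
  by_cases hI : (op b • s) ∩ (a • t) ⊆ {c}
  · -- direct union bound
    have h1 : (op b • s) ∪ (a • t) ⊆ s * t := by
      apply Finset.union_subset
      · intro z hz
        rw [mem_op_smul'] at hz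
        have := Finset.mul_mem_mul hz hbt
        rwa [inv_mul_cancel_right] at this
      · intro z hz
        rw [← Finset.inv_smul_mem_iff] at hz
        have := Finset.mul_mem_mul has hz
        rwa [smul_eq_mul, mul_inv_cancel_left] at this
    calc #s + #t = #(op b • s) + #(a • t) := by rw [card_smul_finset, card_smul_finset]
      _ = #((op b • s) ∪ (a • t)) + #((op b • s) ∩ (a • t)) :=
          (card_union_add_card_inter _ _).symm
      _ ≤ #(s * t) + 1 := add_le_add (card_le_card h1)
          ((Finset.card_le_card hI).trans_eq (Finset.card_singleton c))
  · -- extract a second "diagonal" element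
    obtain ⟨z, hz, hzc⟩ := Finset.not_subset.1 hI
    rw [Finset.mem_singleton] at hzc
    rw [Finset.mem_inter] at hz
    obtain ⟨hz1, hz2⟩ := hz
    rw [mem_op_smul'] at hz1
    rw [← Finset.inv_smul_mem_iff] at hz2
    set σ := z * b⁻¹ with hσdef
    set g := a⁻¹ * σ with hg
    have hσ : σ = a * g := by rw [hg, mul_inv_cancel_left]
    have hσs : σ ∈ s := hz1
    have hg1 : g ≠ 1 := by
      intro h
      apply hzc
      have : σ = a := by rw [hσ, h, mul_one]
      rw [hσdef] at this
      rw [hc, ← this, inv_mul_cancel_right]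
    have hgb : g * b = a⁻¹ * z := by
      rw [hg, hσdef, hb]; group
    have hτt : g * b ∈ t := by rw [hgb]; simpa [smul_eq_mul] using hz2
    have k1 : a * g⁻¹ ∉ s := by
      intro hmem
      have h2 : (a * g⁻¹)⁻¹ * c ∈ t := by
        have : (a * g⁻¹)⁻¹ * c = g * b := by rw [hb]; group
        rw [this]; exact hτt
      have huq := uniq _ hmem h2
      have h3 : a * g⁻¹ = a * 1 := by rw [huq, mul_one]
      exact hg1 (inv_eq_one.1 (mul_left_cancel h3))
    have k2 : g⁻¹ * b ∉ t := by
      intro hmem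
      have h2 : σ⁻¹ * c ∈ t := by
        have : σ⁻¹ * c = g⁻¹ * b := by rw [hσ, hb]; group
        rw [this]; exact hmem
      have huq := uniq σ hσs h2
      rw [hσ] at huq
      exact hg1 (mul_left_cancel (huq.trans (mul_one a).symm))
    by_cases hA : op g • s = s
    · -- terminal case: s is invariant under right multiplication by g
      have hstep : ∀ y : α, y * g ∈ s ↔ y ∈ s := by
        intro y
        conv_lhs => rw [← hA]
        rw [mem_op_smul', mul_inv_cancel_right]
      have hstab : ∀ (k : ℕ) (y : α), y * g ^ k ∈ s ↔ y ∈ s := by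
        intro k
        induction k with
        | zero => simp
        | succ k ihk => intro y; rw [pow_succ, ← mul_assoc, hstep, ihk]
      have hfin : IsOfFinOrder g := by
        by_contra hinf
        have hinj : Function.Injective fun k : ℕ => a * g ^ k := by
          intro i j hij
          simp only [mul_right_inj] at hij
          exact (injective_pow_iff_not_isOfFinOrder.2 hinf) hij
        exact Set.not_infinite.2 s.finite_toSet
          (Set.infinite_of_injective_forall_mem hinj fun k => by
            simpa using (hstab k a).2 has)
      set n := orderOf g with hn
      have hnpos : 0 < n := hfin.orderOf_pos
      have hn1 : n ≠ 1 := fun h => hg1 (orderOf_eq_one_iff.1 h)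
      set C : Finset α := (Finset.range n).image (g ^ ·) with hC
      have hCpow : ∀ k : ℕ, g ^ k ∈ C := by
        intro k
        rw [hC, Finset.mem_image]
        exact ⟨k % n, Finset.mem_range.2 (Nat.mod_lt _ hnpos), pow_mod_orderOf g k⟩
      have hCmem : ∀ x ∈ C, ∃ k : ℕ, g ^ k = x := by
        intro x hx
        rw [hC, Finset.mem_image] at hx
        obtain ⟨k, -, hk⟩ := hx
        exact ⟨k, hk⟩
      have h1C : (1 : α) ∈ C := by simpa using hCpow 0
      have hgC : g ∈ C := by simpa using hCpow 1
      have hCinv : ∀ x ∈ C, x⁻¹ ∈ C := by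
        intro x hx
        obtain ⟨k, rfl⟩ := hCmem x hx
        have harr : k * (n - 1) + k = n * k := by
          have hsp : n - 1 + 1 = n := Nat.succ_pred_eq_of_pos hnpos
          calc k * (n - 1) + k = k * ((n - 1) + 1) := by rw [Nat.mul_succ]
            _ = n * k := by rw [hsp, Nat.mul_comm]
        have : (g ^ k)⁻¹ = g ^ (k * (n - 1)) := by
          rw [eq_comm, eq_inv_iff_mul_eq_one, ← pow_add, harr, pow_mul, pow_orderOf_eq_one,
            one_pow]
        rw [this]; exact hCpow _
      have hsC : ∀ y ∈ s, ∀ h ∈ C, y * h ∈ s := by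
        intro y hy h hh
        obtain ⟨k, rfl⟩ := hCmem h hh
        exact (hstab k y).2 hy
      have haC : a • C ⊆ s := by
        intro w hw
        rw [← Finset.inv_smul_mem_iff] at hw
        have := hsC a has _ hw
        rwa [smul_eq_mul, mul_inv_cancel_left] at this
      have htcap : ∀ h ∈ C, h * b ∈ t → h = 1 := by
        intro h hh hmem
        have hais : a * h⁻¹ ∈ s := hsC a has _ (hCinv h hh)
        have h2 : (a * h⁻¹)⁻¹ * c ∈ t := by
          have : (a * h⁻¹)⁻¹ * c = h * b := by rw [hb]; group
          rw [this]; exact hmem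
        have huq := uniq _ hais h2
        have h3 : a * h⁻¹ = a * 1 := by rw [huq, mul_one]
        exact inv_eq_one.1 (mul_left_cancel h3)
      set s' := s \ (a • C \ {a}) with hs'
      set t' := C * t with ht'
      have hσaC : σ ∈ a • C \ {a} := by
        rw [Finset.mem_sdiff, Finset.mem_singleton]
        constructor
        · rw [hσ, ← smul_eq_mul]
          exact Finset.smul_mem_smul_finset hgC
        · intro h
          rw [hσ] at h
          exact hg1 (mul_left_cancel (h.trans (mul_one a).symm))
      have has' : a ∈ s' := by
        rw [hs', Finset.mem_sdiff, Finset.mem_sdiff, Finset.mem_singleton]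
        exact ⟨has, fun h => absurd rfl h.2⟩
      have hsub' : s' * t' ⊆ s * t := by
        intro w hw
        rw [ht', ← mul_assoc] at hw
        rw [Finset.mem_mul] at hw ⊢
        obtain ⟨p, hp, q, hq, rfl⟩ := hw
        rw [Finset.mem_mul] at hp
        obtain ⟨p1, hp1, p2, hp2, rfl⟩ := hp
        exact ⟨p1 * p2, hsC p1 (Finset.mem_sdiff.1 hp1).1 p2 hp2, q, hq, rfl⟩
      have hCsub : a • C \ {a} ⊆ s := fun w hw => haC (Finset.mem_sdiff.1 hw).1
      have haaC : a ∈ a • C := by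
        have := Finset.smul_mem_smul_finset (a := a) h1C
        rwa [smul_eq_mul, mul_one] at this
      have h2C : 2 ≤ #C := by
        have hsubC : ({1, g} : Finset α) ⊆ C := by
          intro w hw
          rw [Finset.mem_insert, Finset.mem_singleton] at hw
          rcases hw with rfl | rfl
          exacts [h1C, hgC]
        calc 2 = #({1, g} : Finset α) := by
              rw [card_insert_of_notMem (by simpa using hg1.symm), Finset.card_singleton]
          _ ≤ #C := card_le_card hsubC
      have hcards' : #s' + (#C - 1) = #s := by
        have hCa : #(a • C \ {a}) = #C - 1 := by
          rw [card_sdiff_of_subset (Finset.singleton_subset_iff.2 haaC), card_smul_finset, Finset.card_singleton]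
        have hle1 := Finset.card_le_card hCsub
        rw [hs', card_sdiff_of_subset hCsub, hCa]
        rw [hCa] at hle1
        omega
      have hcardt' : #t + (#C - 1) ≤ #t' := by
        have hsubt : t ∪ op b • C ⊆ t' := by
          apply Finset.union_subset
          · intro w hw
            rw [ht']
            have := Finset.mul_mem_mul h1C hw
            rwa [one_mul] at this
          · intro w hw
            rw [mem_op_smul'] at hw
            rw [ht']
            have := Finset.mul_mem_mul hw hbt
            rwa [inv_mul_cancel_right] at this
        have hint : t ∩ op b • C ⊆ {b} := by
          intro w hw
          rw [Finset.mem_inter, mem_op_smul'] at hw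
          have hwb : w * b⁻¹ = 1 := htcap _ hw.2 (by rw [inv_mul_cancel_right]; exact hw.1)
          rw [Finset.mem_singleton]
          exact mul_inv_eq_one.1 hwb
        have := card_union_add_card_inter t (op b • C)
        have h2 := Finset.card_le_card hsubt
        have h3 := (Finset.card_le_card hint).trans_eq (Finset.card_singleton b)
        rw [card_smul_finset] at this
        omega
      have hone : #s' < #s := by omega
      have hadd : #s + #t ≤ #s' + #t' := by omega
      have hrep' : s' ∩ (c • t'⁻¹) = {a} := by
        ext y
        rw [Finset.mem_inter, mem_c_smul_inv, Finset.mem_singleton]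
        constructor
        · rintro ⟨hys', hyc⟩
          rw [ht', Finset.mem_mul] at hyc
          obtain ⟨h, hh, τ, hτ, hhτ⟩ := hyc
          have hyhs : y * h ∈ s := hsC y (Finset.mem_sdiff.1 hys').1 h hh
          have hyha : y * h = a := by
            apply uniq _ hyhs
            have : (y * h)⁻¹ * c = τ := by
              rw [mul_inv_rev, mul_assoc, ← hhτ, inv_mul_cancel_left]
            rw [this]; exact hτ
          have hyaC : y ∈ a • C := by
            have : y = a * h⁻¹ := by rw [← hyha]; group
            rw [this, ← smul_eq_mul]
            exact Finset.smul_mem_smul_finset_iff a |>.2 (hCinv h hh)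
          rcases Finset.mem_sdiff.1 hys' with ⟨-, hn2⟩
          by_contra hne
          exact hn2 (Finset.mem_sdiff.2 ⟨hyaC, by simpa using hne⟩)
        · rintro rfl
          refine ⟨has', ?_⟩
          rw [ht']
          have := Finset.mul_mem_mul h1C hbt
          rwa [one_mul] at this
      have hne' : s'.Nonempty ∧ t'.Nonempty := by
        refine ⟨⟨a, has'⟩, ⟨b, ?_⟩⟩
        rw [ht']
        have := Finset.mul_mem_mul h1C hbt
        rwa [one_mul] at this
      have hrec : #s' + #t' ≤ #(s' * t') + 1 := ih (s', t') hne'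
        (devosMulRel_of_le_of_le (card_le_card hsub') hadd hone) a c hrep'
      have := Finset.card_le_card hsub'
      omega
    · -- e-transform case
      set s₁ := s ∩ op g • s with hs₁
      set t₁ := t ∪ g⁻¹ • t with ht₁
      set s₂ := s ∪ op g • s with hs₂
      set t₂ := t ∩ g⁻¹ • t with ht₂
      have hcs : #s₁ + #s₂ = 2 * #s := by
        rw [hs₁, hs₂, card_inter_add_card_union, card_smul_finset, two_mul]
      have hct : #t₁ + #t₂ = 2 * #t := by
        rw [ht₁, ht₂, card_union_add_card_inter, card_smul_finset, two_mul]
      have hsub1 : s₁ * t₁ ⊆ s * t := by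
        intro w hw
        rw [Finset.mem_mul] at hw ⊢
        obtain ⟨p, hp, q, hq, rfl⟩ := hw
        rw [hs₁, Finset.mem_inter] at hp
        rw [ht₁, Finset.mem_union] at hq
        rcases hq with hq | hq
        · exact ⟨p, hp.1, q, hq, rfl⟩
        · rw [mem_inv_smul'] at hq
          have hp2 := (mem_op_smul' g p s).1 hp.2
          exact ⟨p * g⁻¹, hp2, g * q, hq, by group⟩
      have hsub2 : s₂ * t₂ ⊆ s * t := by
        intro w hw
        rw [Finset.mem_mul] at hw ⊢
        obtain ⟨p, hp, q, hq, rfl⟩ := hw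
        rw [hs₂, Finset.mem_union] at hp
        rw [ht₂, Finset.mem_inter] at hq
        rcases hp with hp | hp
        · exact ⟨p, hp, q, hq.1, rfl⟩
        · rw [mem_op_smul'] at hp
          have hq2 := (mem_inv_smul' g q t).1 hq.2
          exact ⟨p * g⁻¹, hp, g * q, hq2, by group⟩
      have hσs₁ : σ ∈ s₁ := by
        rw [hs₁, Finset.mem_inter, mem_op_smul']
        refine ⟨hσs, ?_⟩
        rw [hσ, mul_inv_cancel_right]
        exact has
      rcases le_or_gt (#s + #t) (#s₁ + #t₁) with hle | hlt
      · -- left transform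
        have hrep1 : s₁ ∩ (c • t₁⁻¹) = {σ} := by
          ext y
          rw [Finset.mem_inter, mem_c_smul_inv, Finset.mem_singleton]
          constructor
          · rintro ⟨hys, hyc⟩
            rw [hs₁, Finset.mem_inter, mem_op_smul'] at hys
            rw [ht₁, Finset.mem_union] at hyc
            rcases hyc with hyc | hyc
            · exact absurd ((uniq y hys.1 hyc) ▸ hys.2) (by simpa using k1)
            · rw [mem_inv_smul'] at hyc
              have : y * g⁻¹ = a := by
                apply uniq _ hys.2
                have : (y * g⁻¹)⁻¹ * c = g * (y⁻¹ * c) := by group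
                rw [this]; exact hyc
              rw [hσ, ← this]; group
          · rintro rfl
            refine ⟨hσs₁, ?_⟩
            rw [ht₁, Finset.mem_union, mem_inv_smul']
            right
            have : g * (σ⁻¹ * c) = b := by rw [hσ, hb]; group
            rw [this]; exact hbt
        have hone : #s₁ < #s := by
          refine card_lt_card ⟨Finset.inter_subset_left, fun hcon => hA ?_⟩
          have hsub : s ⊆ op g • s := fun w hw => (Finset.mem_inter.1 (hcon hw)).2
          exact (Finset.eq_of_subset_of_card_le hsub (by rw [card_smul_finset])).symm
        have hne1 : s₁.Nonempty ∧ t₁.Nonempty :=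
          ⟨⟨σ, hσs₁⟩, hst.2.mono (by rw [ht₁]; exact Finset.subset_union_left)⟩
        have hrec : #s₁ + #t₁ ≤ #(s₁ * t₁) + 1 := ih (s₁, t₁) hne1
          (devosMulRel_of_le_of_le (card_le_card hsub1) hle hone) σ c hrep1
        have := Finset.card_le_card hsub1
        omega
      · -- right transform
        have hrep2 : s₂ ∩ (c • t₂⁻¹) = {a} := by
          ext y
          rw [Finset.mem_inter, mem_c_smul_inv, Finset.mem_singleton]
          constructor
          · rintro ⟨hys, hyc⟩
            rw [ht₂, Finset.mem_inter, mem_inv_smul'] at hyc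
            rw [hs₂, Finset.mem_union] at hys
            rcases hys with hys | hys
            · exact uniq y hys hyc.1
            · rw [mem_op_smul'] at hys
              have hyga : y * g⁻¹ = a := by
                apply uniq _ hys
                have : (y * g⁻¹)⁻¹ * c = g * (y⁻¹ * c) := by group
                rw [this]; exact hyc.2
              have : y = σ := by rw [hσ, ← hyga]; group
              subst this
              have : σ⁻¹ * c = g⁻¹ * b := by rw [hσ, hb]; group
              rw [this] at hyc
              exact absurd hyc.1 k2
          · rintro rfl
            refine ⟨mem_union_left _ has, ?_⟩
            rw [ht₂, Finset.mem_inter, mem_inv_smul']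
            exact ⟨hbt, hτt⟩
        have hne2 : s₂.Nonempty ∧ t₂.Nonempty := by
          refine ⟨hst.1.mono (by rw [hs₂]; exact Finset.subset_union_left), ⟨b, ?_⟩⟩
          rw [ht₂, Finset.mem_inter, mem_inv_smul']
          exact ⟨hbt, hτt⟩
        have hlt2 : #(s, t).1 + #(s, t).2 < #(s₂, t₂).1 + #(s₂, t₂).2 := by
          show #s + #t < #s₂ + #t₂
          omega
        have hrec : #s₂ + #t₂ ≤ #(s₂ * t₂) + 1 := ih (s₂, t₂) hne2
          (devosMulRel_of_le (card_le_card hsub2) hlt2) a c hrep2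
        have := Finset.card_le_card hsub2
        omega

end SKproof

/-- Scherk–Kemperman theorem. -/
theorem stmt0 {G : Type*} [Group G] [DecidableEq G] (A B : Finset G)
    (hA : (1 : G) ∈ A) (hB : (1 : G) ∈ B) (h : A ∩ B⁻¹ = {1}) :
    A.card + B.card - 1 ≤ (A * B).card := by
  have hrep : A ∩ ((1 : G) • B⁻¹) = {1} := by rw [one_smul]; exact h
  have := SKproof.kemperman_core A B 1 1 hrep
  omega
end

section
/- Let A and B be nonempty finite subsets of a group G, and let c ∈ AB. Then |AB| ≥ |A| + |B| − |A ∩ cB⁻¹|, where cB⁻¹ = {cb⁻¹ : b ∈ B}. -/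
open Set Pointwise

variable {V : Type*}

section KempermanProof

variable {G : Type*} [Group G] [DecidableEq G]

/-- Right translate of a finset. -/
private def rmul (x : G) (A : Finset G) : Finset G := A.image (· * x)

private lemma mem_rmul {x y : G} {A : Finset G} : y ∈ rmul x A ↔ ∃ a ∈ A, a * x = y :=
  Finset.mem_image

private lemma card_rmul (x : G) (A : Finset G) : (rmul x A).card = A.card :=
  Finset.card_image_of_injective _ (mul_left_injective x)

private lemma rmul_eq (x : G) (A : Finset G) : rmul x A = A * {x} := by
  ext y
  simp [mem_rmul, Finset.mem_mul]

private lemma rmul_rmul (x : G) (A : Finset G) : rmul x (rmul x⁻¹ A) = A := by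
  rw [rmul_eq, rmul_eq, mul_assoc, Finset.singleton_mul_singleton, inv_mul_cancel]
  exact mul_one A

private lemma rmul_mul (x : G) (A B : Finset G) : A * rmul x B = rmul x (A * B) := by
  rw [rmul_eq, rmul_eq, mul_assoc]

/-- The termination measure. -/
private def kN (A B : Finset G) : ℕ :=
  (2 * (A * B).card - (A.card + B.card)) * ((A * B).card + 1) + B.card

private lemma scherk_rec (n : ℕ) : ∀ A B : Finset G, kN A B ≤ n → 1 ∈ A → 1 ∈ B →
    A ∩ B⁻¹ ⊆ {1} → A.card + B.card ≤ (A * B).card + 1 := by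
  induction n using Nat.strong_induction_on with
  | _ n ih =>
  intro A B hn h1A h1B hM
  have hAsub : A ⊆ A * B := Finset.subset_mul_left A h1B
  have hBsub : B ⊆ A * B := Finset.subset_mul_right B h1A
  by_cases hx : ∃ x ∈ A ∩ B, x ≠ 1
  case neg =>
    push_neg at hx
    have hcard : (A ∩ B).card ≤ 1 := Finset.card_le_one.2 (by
      intro a ha b hb
      rw [hx a ha, hx b hb])
    have hsub : A ∪ B ⊆ A * B := Finset.union_subset hAsub hBsub
    have h1 := Finset.card_union_add_card_inter A B
    have h2 := Finset.card_le_card hsub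
    omega
  case pos =>
  obtain ⟨x, hxAB, hx1⟩ := hx
  have hxA : x ∈ A := (Finset.mem_inter.1 hxAB).1
  have hxB : x ∈ B := (Finset.mem_inter.1 hxAB).2
  have moser : ∀ a ∈ A, a⁻¹ ∈ B → a = 1 := by
    intro a ha hb
    have : a ∈ A ∩ B⁻¹ := Finset.mem_inter.2 ⟨ha, Finset.mem_inv'.2 hb⟩
    simpa using hM this
  have hxinvB : x⁻¹ ∉ B := fun h => hx1 (moser x hxA h)
  have hq1 : (x • B \ B).Nonempty := by
    rw [Finset.sdiff_nonempty]
    intro hsub2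
    have hxBeq : x • B = B :=
      Finset.eq_of_subset_of_card_le hsub2 (by rw [Finset.card_smul_finset])
    have hBinv : x⁻¹ • B = B := by
      conv_lhs => rw [← hxBeq]
      exact inv_smul_smul x B
    have : x⁻¹ ∈ B := by
      rw [← hBinv]
      exact Finset.mem_smul_finset.2 ⟨1, h1B, by simp⟩
    exact hxinvB this
  set p := (rmul x A \ A).card with hp
  set q := (x • B \ B).card with hqdef
  have hq : 1 ≤ q := Finset.card_pos.2 hq1
  rcases le_or_gt q p with hcase | hcase
  · -- t1 : A' = A ∪ Ax, B' = B ∩ x⁻¹B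
    set A' := A ∪ rmul x A with hA'def
    set B' := B ∩ (x⁻¹ • B) with hB'def
    have h1A' : 1 ∈ A' := Finset.mem_union_left _ h1A
    have h1B' : 1 ∈ B' :=
      Finset.mem_inter.2 ⟨h1B, Finset.mem_smul_finset.2 ⟨x, hxB, by simp⟩⟩
    have hsubprod : A' * B' ⊆ A * B := by
      intro z hz
      obtain ⟨a, ha, b, hb, rfl⟩ := Finset.mem_mul.1 hz
      have hbB : b ∈ B := (Finset.mem_inter.1 hb).1
      have hbx : b ∈ x⁻¹ • B := (Finset.mem_inter.1 hb).2
      rcases Finset.mem_union.1 ha with haA | haX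
      · exact Finset.mul_mem_mul haA hbB
      · obtain ⟨a0, ha0, rfl⟩ := mem_rmul.1 haX
        obtain ⟨b0, hb0, rfl⟩ := Finset.mem_smul_finset.1 hbx
        have : a0 * x * (x⁻¹ • b0) = a0 * b0 := by
          simp [smul_eq_mul]
        rw [this]
        exact Finset.mul_mem_mul ha0 hb0
    have hmoser' : A' ∩ B'⁻¹ ⊆ {1} := by
      intro y hy
      obtain ⟨hyA', hyB'⟩ := Finset.mem_inter.1 hy
      have hyinv : y⁻¹ ∈ B' := Finset.mem_inv'.1 hyB'
      have hyinvB : y⁻¹ ∈ B := (Finset.mem_inter.1 hyinv).1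
      rcases Finset.mem_union.1 hyA' with h | h
      · simp [moser y h hyinvB]
      · obtain ⟨a0, ha0, rfl⟩ := mem_rmul.1 h
        have hmem : (a0 * x)⁻¹ ∈ x⁻¹ • B := (Finset.mem_inter.1 hyinv).2
        obtain ⟨b0, hb0, hbeq⟩ := Finset.mem_smul_finset.1 hmem
        have hb0eq : b0 = a0⁻¹ := by
          have : x⁻¹ * b0 = x⁻¹ * a0⁻¹ := by
            rw [← mul_inv_rev]
            simpa [smul_eq_mul] using hbeq
          exact mul_left_cancel this
        have ha01 : a0 = 1 := moser a0 ha0 (by rw [← hb0eq]; exact hb0)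
        exfalso
        apply hxinvB
        have : (a0 * x)⁻¹ = x⁻¹ := by rw [ha01, one_mul]
        rw [← this]
        exact hyinvB
    have hcardA' : A'.card = A.card + p := by
      rw [hA'def, ← Finset.union_sdiff_self_eq_union,
        Finset.card_union_of_disjoint Finset.disjoint_sdiff]
    have hBB' : B' ⊆ B := Finset.inter_subset_left
    have hcardB' : B'.card + q = B.card := by
      have h1 : B \ B' = B \ (x⁻¹ • B) := Finset.sdiff_inter_self_left B _
      have h2 : x • (B \ (x⁻¹ • B)) = x • B \ B := by
        rw [Finset.smul_finset_sdiff, smul_inv_smul]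
      have h3 : (B \ B').card = q := by
        rw [h1, ← Finset.card_smul_finset x, h2]
      have h4 := Finset.card_sdiff_add_card_eq_card hBB'
      omega
    have hprod' : (A' * B').card ≤ (A * B).card := Finset.card_le_card hsubprod
    have hA'sub : A' ⊆ A' * B' := Finset.subset_mul_left A' h1B'
    have hB'sub : B' ⊆ A' * B' := Finset.subset_mul_right B' h1A'
    have c1 : A'.card + B'.card ≤ 2 * (A' * B').card := by
      have i1 := Finset.card_le_card hA'sub
      have i2 := Finset.card_le_card hB'sub
      omega
    have c0 : A.card + B.card ≤ 2 * (A * B).card := by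
      have i1 := Finset.card_le_card hAsub
      have i2 := Finset.card_le_card hBsub
      omega
    have hNlt : kN A' B' < kN A B := by
      have ha' : 2 * (A' * B').card - (A'.card + B'.card)
          ≤ 2 * (A * B).card - (A.card + B.card) := by omega
      have hBlt : B'.card < B.card := by omega
      have hmul : (2 * (A' * B').card - (A'.card + B'.card)) * ((A' * B').card + 1)
          ≤ (2 * (A * B).card - (A.card + B.card)) * ((A * B).card + 1) := by
        apply Nat.mul_le_mul ha'
        omega
      unfold kN
      omega
    have hrec := ih (kN A' B') (lt_of_lt_of_le hNlt hn) A' B' le_rfl h1A' h1B' hmoser'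
    omega
  · -- t2 : A'' = A ∩ Ax⁻¹, B'' = B ∪ xB
    set A'' := A ∩ rmul x⁻¹ A with hA''def
    set B'' := B ∪ x • B with hB''def
    have h1A'' : 1 ∈ A'' :=
      Finset.mem_inter.2 ⟨h1A, mem_rmul.2 ⟨x, hxA, by simp⟩⟩
    have h1B'' : 1 ∈ B'' := Finset.mem_union_left _ h1B
    have hsubprod : A'' * B'' ⊆ A * B := by
      intro z hz
      obtain ⟨a, ha, b, hb, rfl⟩ := Finset.mem_mul.1 hz
      have haA : a ∈ A := (Finset.mem_inter.1 ha).1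
      rcases Finset.mem_union.1 hb with hbB | hbx
      · exact Finset.mul_mem_mul haA hbB
      · obtain ⟨a0, ha0, haeq⟩ := mem_rmul.1 (Finset.mem_inter.1 ha).2
        obtain ⟨b0, hb0, rfl⟩ := Finset.mem_smul_finset.1 hbx
        have : a * (x • b0) = a0 * b0 := by
          rw [← haeq]
          simp [smul_eq_mul]
        rw [this]
        exact Finset.mul_mem_mul ha0 hb0
    have hmoser'' : A'' ∩ B''⁻¹ ⊆ {1} := by
      intro y hy
      obtain ⟨hyA'', hyB''⟩ := Finset.mem_inter.1 hy
      have hyA : y ∈ A := (Finset.mem_inter.1 hyA'').1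
      have hyinv : y⁻¹ ∈ B'' := Finset.mem_inv'.1 hyB''
      rcases Finset.mem_union.1 hyinv with h | h
      · simp [moser y hyA h]
      · obtain ⟨b0, hb0, hbeq⟩ := Finset.mem_smul_finset.1 h
        obtain ⟨a0, ha0, haeq⟩ := mem_rmul.1 (Finset.mem_inter.1 hyA'').2
        have hb0eq : b0 = a0⁻¹ := by
          have h5 : x * b0 = x * a0⁻¹ := by
            rw [smul_eq_mul] at hbeq
            rw [hbeq, ← haeq]
            group
          exact mul_left_cancel h5
        have ha01 : a0 = 1 := moser a0 ha0 (by rw [← hb0eq]; exact hb0)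
        exfalso
        have hyx : y = x⁻¹ := by rw [← haeq, ha01, one_mul]
        have : x⁻¹ ∈ A := hyx ▸ hyA
        have := moser x⁻¹ this (by simpa using hxB)
        exact hx1 (by simpa using this)
    have hcardB'' : B''.card = B.card + q := by
      rw [hB''def, ← Finset.union_sdiff_self_eq_union,
        Finset.card_union_of_disjoint Finset.disjoint_sdiff]
    have hAA'' : A'' ⊆ A := Finset.inter_subset_left
    have hcardA'' : A''.card + p = A.card := by
      have h1 : A \ A'' = A \ rmul x⁻¹ A := Finset.sdiff_inter_self_left A _
      have h2 : rmul x (A \ rmul x⁻¹ A) = rmul x A \ A := by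
        rw [show rmul x (A \ rmul x⁻¹ A) = (A \ rmul x⁻¹ A).image (· * x) from rfl,
          Finset.image_sdiff _ _ (mul_left_injective x)]
        rw [show (A.image (· * x)) = rmul x A from rfl]
        rw [show ((rmul x⁻¹ A).image (· * x)) = rmul x (rmul x⁻¹ A) from rfl, rmul_rmul]
      have h3 : (A \ A'').card = p := by
        rw [h1, hp]
        calc (A \ rmul x⁻¹ A).card = (rmul x (A \ rmul x⁻¹ A)).card := (card_rmul _ _).symm
          _ = (rmul x A \ A).card := by rw [h2]
      have h4 := Finset.card_sdiff_add_card_eq_card hAA''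
      omega
    have hprod'' : (A'' * B'').card ≤ (A * B).card := Finset.card_le_card hsubprod
    have hA''sub : A'' ⊆ A'' * B'' := Finset.subset_mul_left A'' h1B''
    have hB''sub : B'' ⊆ A'' * B'' := Finset.subset_mul_right B'' h1A''
    have c1 : A''.card + B''.card ≤ 2 * (A'' * B'').card := by
      have i1 := Finset.card_le_card hA''sub
      have i2 := Finset.card_le_card hB''sub
      omega
    have hsum : A.card + B.card < A''.card + B''.card := by omega
    have hB2 : B''.card ≤ (A * B).card := le_trans (Finset.card_le_card hB''sub) hprod''
    have ha2 : (2 * (A'' * B'').card - (A''.card + B''.card)) + 1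
        ≤ 2 * (A * B).card - (A.card + B.card) := by omega
    have hNlt : kN A'' B'' < kN A B := by
      show (2 * (A'' * B'').card - (A''.card + B''.card)) * ((A'' * B'').card + 1) + B''.card
          < (2 * (A * B).card - (A.card + B.card)) * ((A * B).card + 1) + B.card
      calc (2 * (A'' * B'').card - (A''.card + B''.card)) * ((A'' * B'').card + 1) + B''.card
          ≤ (2 * (A'' * B'').card - (A''.card + B''.card)) * ((A * B).card + 1)
              + (A * B).card := by
            have := Nat.mul_le_mul_left (2 * (A'' * B'').card - (A''.card + B''.card))
              (show (A'' * B'').card + 1 ≤ (A * B).card + 1 by omega)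
            omega
        _ < ((2 * (A'' * B'').card - (A''.card + B''.card)) + 1) * ((A * B).card + 1) := by
            have hexp : ((2 * (A'' * B'').card - (A''.card + B''.card)) + 1) * ((A * B).card + 1)
                = (2 * (A'' * B'').card - (A''.card + B''.card)) * ((A * B).card + 1)
                  + ((A * B).card + 1) := by ring
            omega
        _ ≤ (2 * (A * B).card - (A.card + B.card)) * ((A * B).card + 1) :=
            Nat.mul_le_mul_right _ ha2
        _ ≤ (2 * (A * B).card - (A.card + B.card)) * ((A * B).card + 1) + B.card :=
            Nat.le_add_right _ _
    have hrec := ih (kN A'' B'') (lt_of_lt_of_le hNlt hn) A'' B'' le_rfl h1A'' h1B'' hmoser''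
    omega

/-- Normalized Scherk–Kemperman. -/
private lemma scherk (A B : Finset G) (h1A : 1 ∈ A) (h1B : 1 ∈ B)
    (hM : A ∩ B⁻¹ ⊆ {1}) : A.card + B.card ≤ (A * B).card + 1 :=
  scherk_rec (kN A B) A B le_rfl h1A h1B hM

/-- Scherk–Kemperman with a unique representation point. -/
private lemma scherk_c (A B : Finset G) (a₀ b₀ : G) (ha : a₀ ∈ A) (hb : b₀ ∈ B)
    (huniq : A ∩ (a₀ * b₀) • B⁻¹ ⊆ {a₀}) : A.card + B.card ≤ (A * B).card + 1 := by
  set A' := a₀⁻¹ • A with hA'def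
  set B' := rmul b₀⁻¹ B with hB'def
  have h1A' : 1 ∈ A' := Finset.mem_smul_finset.2 ⟨a₀, ha, by simp⟩
  have h1B' : 1 ∈ B' := mem_rmul.2 ⟨b₀, hb, by simp⟩
  have hmoser : A' ∩ B'⁻¹ ⊆ {1} := by
    intro y hy
    obtain ⟨hyA, hyB⟩ := Finset.mem_inter.1 hy
    obtain ⟨a, haA, haeq⟩ := Finset.mem_smul_finset.1 hyA
    have hyB2 : y⁻¹ ∈ B' := Finset.mem_inv'.1 hyB
    obtain ⟨b, hbB, hbeq⟩ := mem_rmul.1 hyB2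
    have haC : a ∈ (a₀ * b₀) • B⁻¹ := by
      refine Finset.mem_smul_finset.2 ⟨b⁻¹, Finset.inv_mem_inv hbB, ?_⟩
      -- (a₀ * b₀) • b⁻¹ = a
      have hy1 : y = a₀⁻¹ * a := by rw [← haeq]; simp [smul_eq_mul]
      have hy2 : y⁻¹ = b * b₀⁻¹ := hbeq.symm
      have : a₀⁻¹ * a = b₀ * b⁻¹ := by
        rw [← hy1]
        have := congrArg (·⁻¹) hy2
        simpa [mul_inv_rev] using this
      rw [smul_eq_mul, mul_assoc, ← this]
      group
    have haa0 : a = a₀ := by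
      simpa using huniq (Finset.mem_inter.2 ⟨haA, haC⟩)
    have : y = 1 := by rw [← haeq, haa0]; simp [smul_eq_mul]
    simp [this]
  have hprodeq : A' * B' = a₀⁻¹ • rmul b₀⁻¹ (A * B) := by
    rw [hA'def, hB'def, smul_mul_assoc, rmul_mul]
  have hkey := scherk A' B' h1A' h1B' hmoser
  have e1 : A'.card = A.card := Finset.card_smul_finset _ _
  have e2 : B'.card = B.card := card_rmul _ _
  have e3 : (A' * B').card = (A * B).card := by
    rw [hprodeq, Finset.card_smul_finset, card_rmul]
  omega

end KempermanProof

/-- Kemperman's theorem. -/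
theorem stmt1 {G : Type*} [Group G] [DecidableEq G] (A B : Finset G)
    (hA : A.Nonempty) (hB : B.Nonempty) (c : G) (hc : c ∈ A * B) :
    A.card + B.card - (A ∩ c • B⁻¹).card ≤ (A * B).card := by
  obtain ⟨a₀, ha₀, b₀, hb₀, hc'⟩ := Finset.mem_mul.1 hc
  subst hc'
  set S := A ∩ (a₀ * b₀) • B⁻¹ with hS
  have ha₀S : a₀ ∈ S := by
    refine Finset.mem_inter.2 ⟨ha₀, Finset.mem_smul_finset.2 ⟨b₀⁻¹, Finset.inv_mem_inv hb₀, ?_⟩⟩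
    simp [smul_eq_mul]
  set A' := (A \ S) ∪ {a₀} with hA'
  have hA'A : A' ⊆ A := by
    apply Finset.union_subset Finset.sdiff_subset
    simpa using ha₀
  have huniq : A' ∩ (a₀ * b₀) • B⁻¹ ⊆ {a₀} := by
    intro y hy
    obtain ⟨h1, h2⟩ := Finset.mem_inter.1 hy
    rcases Finset.mem_union.1 h1 with h | h
    · exfalso
      exact (Finset.mem_sdiff.1 h).2 (Finset.mem_inter.2 ⟨(Finset.mem_sdiff.1 h).1, h2⟩)
    · exact h
  have ha₀A' : a₀ ∈ A' := Finset.mem_union_right _ (Finset.mem_singleton_self a₀)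
  have key := scherk_c A' B a₀ b₀ ha₀A' hb₀ huniq
  have hsub : A' * B ⊆ A * B := Finset.mul_subset_mul hA'A Finset.Subset.rfl
  have hcards := Finset.card_le_card hsub
  have hSA : S ⊆ A := Finset.inter_subset_left
  have hdisj : Disjoint (A \ S) {a₀} := by
    simp [Finset.disjoint_singleton_right, ha₀S]
  have hcardA' : A'.card + S.card = A.card + 1 := by
    rw [hA', Finset.card_union_of_disjoint hdisj, Finset.card_singleton]
    have h4 := Finset.card_sdiff_add_card_eq_card hSA
    omega
  omega
end

section
/- Let Γ be a reflexive relation on a set V such that Γ(x) is finite for every x ∈ V, and let X, Y be finite subsets of V. Then |∂(X ∪ Y)| + |∂(X ∩ Y)| ≤ |∂(X)| + |∂(Y)|, where ∂(F) = Γ(F) \ F and Γ(F) is the image of F under the relation. -/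
open Set Pointwise

variable {V : Type*}

/-- Submodularity of the boundary. -/
theorem stmt2 {V : Type*} (Γ : V → Set V) (hr : Refl Γ) (hlf : LocFin Γ)
    (X Y : Set V) (hX : X.Finite) (hY : Y.Finite) :
    (bd Γ (X ∪ Y)).ncard + (bd Γ (X ∩ Y)).ncard ≤ (bd Γ X).ncard + (bd Γ Y).ncard := by
  have himg : ∀ F : Set V, F.Finite → (img Γ F).Finite :=
    fun F hF => hF.biUnion (fun x _ => hlf x)
  have hbd : ∀ F : Set V, F.Finite → (bd Γ F).Finite :=
    fun F hF => (himg F hF).subset diff_subset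
  have hmem : ∀ (F : Set V) z, z ∈ img Γ F ↔ ∃ x ∈ F, z ∈ Γ x := by
    intro F z; simp [img]
  have hU := hbd _ (hX.union hY)
  have hI := hbd (X ∩ Y) (hX.subset Set.inter_subset_left)
  have hBX := hbd _ hX
  have hBY := hbd _ hY
  have hsub1 : bd Γ (X ∪ Y) ∪ bd Γ (X ∩ Y) ⊆ bd Γ X ∪ bd Γ Y := by
    rintro z (⟨hzi, hzn⟩ | ⟨hzi, hzn⟩)
    · rcases (hmem _ z).1 hzi with ⟨x, hx | hx, hzx⟩
      · exact Or.inl ⟨(hmem _ z).2 ⟨x, hx, hzx⟩, fun h => hzn (Or.inl h)⟩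
      · exact Or.inr ⟨(hmem _ z).2 ⟨x, hx, hzx⟩, fun h => hzn (Or.inr h)⟩
    · rcases (hmem _ z).1 hzi with ⟨x, ⟨hx1, hx2⟩, hzx⟩
      by_cases hz : z ∈ X
      · exact Or.inr ⟨(hmem _ z).2 ⟨x, hx2, hzx⟩, fun h => hzn ⟨hz, h⟩⟩
      · exact Or.inl ⟨(hmem _ z).2 ⟨x, hx1, hzx⟩, hz⟩
  have hsub2 : bd Γ (X ∪ Y) ∩ bd Γ (X ∩ Y) ⊆ bd Γ X ∩ bd Γ Y := by
    rintro z ⟨⟨_, hzn⟩, ⟨hzi, _⟩⟩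
    rcases (hmem _ z).1 hzi with ⟨x, ⟨hx1, hx2⟩, hzx⟩
    exact ⟨⟨(hmem _ z).2 ⟨x, hx1, hzx⟩, fun h => hzn (Or.inl h)⟩,
      ⟨(hmem _ z).2 ⟨x, hx2, hzx⟩, fun h => hzn (Or.inr h)⟩⟩
  calc (bd Γ (X ∪ Y)).ncard + (bd Γ (X ∩ Y)).ncard
      = (bd Γ (X ∪ Y) ∪ bd Γ (X ∩ Y)).ncard + (bd Γ (X ∪ Y) ∩ bd Γ (X ∩ Y)).ncard := by
        rw [Set.ncard_union_add_ncard_inter _ _ hU hI]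
    _ ≤ (bd Γ X ∪ bd Γ Y).ncard + (bd Γ X ∩ bd Γ Y).ncard := by
        exact add_le_add (Set.ncard_le_ncard hsub1 (hBX.union hBY))
          (Set.ncard_le_ncard hsub2 ((hbd X hX).subset Set.inter_subset_left))
    _ = (bd Γ X).ncard + (bd Γ Y).ncard := Set.ncard_union_add_ncard_inter _ _ hBX hBY
end

section
/- Let Γ be a reflexive relation on V with Γ(x) finite for all x, and fix v ∈ V. If F₁ and F₂ are both v-molecules (finite v-Moser sets achieving the minimum boundary size μ(v)), then F₁ ∩ F₂ and F₁ ∪ F₂ are v-molecules. -/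
open Set Pointwise

variable {V : Type*}

lemma img_finite {Γ : V → Set V} (hlf : LocFin Γ) {F : Set V} (hF : F.Finite) :
    (img Γ F).Finite := hF.biUnion (fun x _ => hlf x)

lemma subset_img {Γ : V → Set V} (hr : Refl Γ) (F : Set V) : F ⊆ img Γ F :=
  fun x hx => Set.mem_biUnion hx (hr x)

lemma img_mono {Γ : V → Set V} {A B : Set V} (h : A ⊆ B) : img Γ A ⊆ img Γ B :=
  Set.biUnion_mono h (fun _ _ => le_rfl)

lemma img_union {Γ : V → Set V} (A B : Set V) : img Γ (A ∪ B) = img Γ A ∪ img Γ B :=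
  Set.biUnion_union A B Γ

lemma bd_card {Γ : V → Set V} (hr : Refl Γ) (hlf : LocFin Γ) {F : Set V}
    (hF : F.Finite) : (bd Γ F).ncard + F.ncard = (img Γ F).ncard :=
  Set.ncard_diff_add_ncard_of_subset (subset_img hr F) (img_finite hlf hF)

lemma submodular {Γ : V → Set V} (hr : Refl Γ) (hlf : LocFin Γ) {A B : Set V}
    (hA : A.Finite) (hB : B.Finite) :
    (bd Γ (A ∩ B)).ncard + (bd Γ (A ∪ B)).ncard ≤ (bd Γ A).ncard + (bd Γ B).ncard := by
  have hiA := img_finite hlf hA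
  have hiB := img_finite hlf hB
  have h1 := bd_card hr hlf hA
  have h2 := bd_card hr hlf hB
  have h3 := bd_card hr hlf (hA.inter_of_left B)
  have h4 := bd_card hr hlf (hA.union hB)
  have h5 : A.ncard + B.ncard = (A ∩ B).ncard + (A ∪ B).ncard := by
    rw [add_comm ((A ∩ B).ncard), Set.ncard_union_add_ncard_inter A B hA hB]
  have h6 : (img Γ A).ncard + (img Γ B).ncard
      = (img Γ A ∩ img Γ B).ncard + (img Γ A ∪ img Γ B).ncard := by
    rw [add_comm ((img Γ A ∩ img Γ B).ncard),
      Set.ncard_union_add_ncard_inter _ _ hiA hiB]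
  have h7 : (img Γ (A ∩ B)).ncard ≤ (img Γ A ∩ img Γ B).ncard := by
    apply Set.ncard_le_ncard _ (hiA.inter_of_left _)
    exact Set.subset_inter (img_mono Set.inter_subset_left) (img_mono Set.inter_subset_right)
  have h8 : (img Γ (A ∪ B)).ncard = (img Γ A ∪ img Γ B).ncard := by
    rw [img_union]
  omega

lemma mu_le {Γ : V → Set V} {v : V} {F : Set V} (h : MoserSet Γ v F) :
    mu Γ v ≤ (bd Γ F).ncard :=
  Nat.sInf_le ⟨F, h, rfl⟩


/-- Intersection and union of two v-molecules are v-molecules. -/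
theorem stmt4 {V : Type*} (Γ : V → Set V) (hr : Refl Γ) (hlf : LocFin Γ)
    (v : V) (F₁ F₂ : Set V) (h₁ : Molecule Γ v F₁) (h₂ : Molecule Γ v F₂) :
    Molecule Γ v (F₁ ∩ F₂) ∧ Molecule Γ v (F₁ ∪ F₂) := by
  obtain ⟨⟨hf₁, hv₁, hrev₁⟩, hc₁⟩ := h₁
  obtain ⟨⟨hf₂, hv₂, hrev₂⟩, hc₂⟩ := h₂
  have hMi : MoserSet Γ v (F₁ ∩ F₂) := by
    refine ⟨hf₁.inter_of_left _, ⟨hv₁, hv₂⟩, ?_⟩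
    apply Set.Subset.antisymm
    · intro x hx; rw [← hrev₁]; exact ⟨hx.1, hx.2.1⟩
    · intro x hx; rw [Set.mem_singleton_iff] at hx; rw [hx]
      exact ⟨hr v, hv₁, hv₂⟩
  have hMu : MoserSet Γ v (F₁ ∪ F₂) := by
    refine ⟨hf₁.union hf₂, Or.inl hv₁, ?_⟩
    rw [Set.inter_union_distrib_left, hrev₁, hrev₂, Set.union_self]
  have hle := submodular hr hlf hf₁ hf₂ (Γ := Γ)
  have l1 := mu_le hMi
  have l2 := mu_le hMu
  exact ⟨⟨hMi, by omega⟩, ⟨hMu, by omega⟩⟩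
end

section
/- Let Γ be a reflexive locally-finite relation on V. For distinct vertices v, w ∈ V, the v-kernel K_v and the w-kernel K_w are distinct: K_v ≠ K_w. -/
open Set Pointwise

variable {V : Type*}

/-- Kernels of distinct vertices are distinct. -/
theorem stmt5 {V : Type*} (Γ : V → Set V) (hr : Refl Γ) (hlf : LocFin Γ)
    (v w : V) (hvw : v ≠ w) (Kv Kw : Set V)
    (hKv : IsKernel Γ v Kv) (hKw : IsKernel Γ w Kw) : Kv ≠ Kw := by
  intro heq
  obtain ⟨⟨⟨hfin, hv, hrv⟩, hcard⟩, hmin⟩ := hKv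
  obtain ⟨⟨⟨_, hw, hrw⟩, _⟩, _⟩ := hKw
  rw [← heq] at hw hrw
  set F := Kv \ {w} with hF
  -- w is not reachable from F
  have hwimg : w ∉ img Γ F := by
    intro hmem
    simp only [img, mem_iUnion] at hmem
    obtain ⟨x, ⟨hxK, hxw⟩, hwx⟩ := hmem
    have hx : x ∈ rev Γ w ∩ Kv := ⟨hwx, hxK⟩
    rw [hrw] at hx
    exact hxw hx
  -- F is a v-Moser set
  have hFMoser : MoserSet Γ v F := by
    refine ⟨hfin.diff, ⟨hv, hvw⟩, ?_⟩
    rw [hF, ← Set.inter_diff_assoc, hrv]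
    ext x
    simp only [mem_diff, mem_singleton_iff]
    constructor
    · rintro ⟨h1, _⟩; exact h1
    · rintro rfl; exact ⟨rfl, hvw⟩
  -- the boundary of F is contained in the boundary of Kv
  have hbd : bd Γ F ⊆ bd Γ Kv := by
    rintro y ⟨hyimg, hynF⟩
    have hyw : y ≠ w := fun h => hwimg (h ▸ hyimg)
    have hyimgK : y ∈ img Γ Kv := by
      simp only [img, mem_iUnion] at hyimg ⊢
      obtain ⟨x, hx1, hx2⟩ := hyimg
      exact ⟨x, hx1.1, hx2⟩
    have hynK : y ∉ Kv := fun h => hynF ⟨h, hyw⟩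
    exact ⟨hyimgK, hynK⟩
  have hbdfin : (bd Γ Kv).Finite := by
    have : (img Γ Kv).Finite := Set.Finite.biUnion hfin fun x _ => hlf x
    exact this.diff
  have hle1 : mu Γ v ≤ (bd Γ F).ncard := Nat.sInf_le ⟨F, hFMoser, rfl⟩
  have hle2 : (bd Γ F).ncard ≤ (bd Γ Kv).ncard := Set.ncard_le_ncard hbd hbdfin
  have hFmol : Molecule Γ v F := ⟨hFMoser, le_antisymm (hcard ▸ hle2) hle1⟩
  have : w ∈ F := hmin F hFmol hw
  exact this.2 rfl
end

section
/- Let G be a group, B ⊆ G a finite subset with 1 ∈ B, and Γ = Cay(G, B) the Cayley graph with x → y iff x⁻¹y ∈ B. Then the kernel graph Ω of Γ is itself a Cayley graph: Ω = Cay(G, B ∩ K₁), where K₁ is the 1-kernel of Γ. -/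
open Set Pointwise

variable {V : Type*}

section AuxKernel

variable {Γ : V → Set V} {φ : V ≃ V}

lemma auto_img (h : IsAuto Γ φ) (F : Set V) : img Γ (φ '' F) = φ '' img Γ F := by
  ext z
  simp only [img, mem_iUnion, Set.mem_image]
  constructor
  · rintro ⟨x, ⟨y, hy, rfl⟩, hz⟩
    rw [h y] at hz
    obtain ⟨w, hw, rfl⟩ := hz
    exact ⟨w, ⟨y, hy, hw⟩, rfl⟩
  · rintro ⟨w, ⟨y, hy, hw⟩, rfl⟩
    exact ⟨φ y, ⟨y, hy, rfl⟩, by rw [h y]; exact ⟨w, hw, rfl⟩⟩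

lemma auto_rev (h : IsAuto Γ φ) (v : V) : rev Γ (φ v) = φ '' rev Γ v := by
  ext x
  simp only [rev, Set.mem_setOf_eq, Set.mem_image]
  constructor
  · intro hx
    refine ⟨φ.symm x, ?_, φ.apply_symm_apply x⟩
    have h2 := h (φ.symm x)
    rw [φ.apply_symm_apply] at h2
    have hx' : φ v ∈ φ '' Γ (φ.symm x) := h2 ▸ hx
    rcases hx' with ⟨w, hw, hww⟩
    rwa [φ.injective hww] at hw
  · rintro ⟨y, hy, rfl⟩
    rw [h y]
    exact ⟨v, hy, rfl⟩

lemma auto_bd (h : IsAuto Γ φ) (F : Set V) : bd Γ (φ '' F) = φ '' bd Γ F := by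
  rw [bd, bd, auto_img h, Set.image_diff φ.injective]

lemma auto_moser (h : IsAuto Γ φ) {v : V} {F : Set V} (hF : MoserSet Γ v F) :
    MoserSet Γ (φ v) (φ '' F) := by
  obtain ⟨hfin, hv, hrev⟩ := hF
  refine ⟨hfin.image φ, ⟨v, hv, rfl⟩, ?_⟩
  rw [auto_rev h, ← Set.image_inter φ.injective, hrev, Set.image_singleton]

lemma auto_symm (h : IsAuto Γ φ) : IsAuto Γ φ.symm := by
  intro x
  have := h (φ.symm x)
  rw [φ.apply_symm_apply] at this
  rw [this, ← Set.image_comp]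
  simp

lemma auto_mu (h : IsAuto Γ φ) (v : V) : mu Γ (φ v) = mu Γ v := by
  unfold mu
  congr 1
  ext n
  constructor
  · rintro ⟨F, hF, hn⟩
    refine ⟨φ.symm '' F, ?_, ?_⟩
    · have := auto_moser (auto_symm h) hF
      rwa [φ.symm_apply_apply] at this
    · rw [auto_bd (auto_symm h), Set.ncard_image_of_injective _ φ.symm.injective, hn]
  · rintro ⟨F, hF, hn⟩
    exact ⟨φ '' F, auto_moser h hF,
      by rw [auto_bd h, Set.ncard_image_of_injective _ φ.injective, hn]⟩

lemma auto_kernel (h : IsAuto Γ φ) {v : V} {K : Set V} (hK : IsKernel Γ v K) :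
    IsKernel Γ (φ v) (φ '' K) := by
  obtain ⟨⟨hM, hbd⟩, hmin⟩ := hK
  refine ⟨⟨auto_moser h hM, ?_⟩, ?_⟩
  · rw [auto_bd h, Set.ncard_image_of_injective _ φ.injective, hbd, auto_mu h]
  · intro F ⟨hFM, hFbd⟩
    have hM' : MoserSet Γ v (φ.symm '' F) := by
      have := auto_moser (auto_symm h) hFM
      rwa [φ.symm_apply_apply] at this
    have : K ⊆ φ.symm '' F := by
      apply hmin
      refine ⟨hM', ?_⟩
      rw [auto_bd (auto_symm h), Set.ncard_image_of_injective _ φ.symm.injective, hFbd,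
        auto_mu h]
    intro z hz
    obtain ⟨w, hw, rfl⟩ := hz
    obtain ⟨u, hu, huw⟩ := this hw
    rw [← huw]
    simpa using hu

lemma kernel_unique {Γ : V → Set V} {v : V} {K K' : Set V}
    (h : IsKernel Γ v K) (h' : IsKernel Γ v K') : K = K' :=
  Set.Subset.antisymm (h.2 _ h'.1) (h'.2 _ h.1)

end AuxKernel

/-- The kernel graph of a Cayley graph is a Cayley graph:
Ω = Cay(G, B ∩ K₁). -/
theorem stmt15 {G : Type*} [Group G] (B : Finset G) (hB : (1 : G) ∈ B)
    (Γ : G → Set G) (hΓ : ∀ x : G, Γ x = {y | x⁻¹ * y ∈ B})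
    (K : G → Set G) (hK : ∀ v, IsKernel Γ v (K v)) :
    ∀ x : G, Γ x ∩ K x = {y | x⁻¹ * y ∈ (B : Set G) ∩ K 1} := by
  intro x
  have hauto : IsAuto Γ (Equiv.mulLeft x) := by
    intro y
    ext z
    simp only [hΓ, Set.mem_setOf_eq, Set.mem_image, Equiv.coe_mulLeft]
    constructor
    · intro hz
      refine ⟨x⁻¹ * z, ?_, by group⟩
      rw [show y⁻¹ * (x⁻¹ * z) = (x * y)⁻¹ * z by group]; exact hz
    · rintro ⟨w, hw, rfl⟩
      rw [show (x * y)⁻¹ * (x * w) = y⁻¹ * w by group]; exact hw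
  have hKx : K x = (Equiv.mulLeft x) '' K 1 := by
    have := auto_kernel hauto (hK 1)
    simp only [Equiv.coe_mulLeft, mul_one] at this
    exact kernel_unique (hK x) this
  ext y
  simp only [hΓ, hKx, Set.mem_inter_iff, Set.mem_setOf_eq, Set.mem_image, Equiv.coe_mulLeft]
  constructor
  · rintro ⟨hb, w, hw, rfl⟩
    refine ⟨hb, ?_⟩
    convert hw using 1; group
  · rintro ⟨hb, hk⟩
    exact ⟨hb, x⁻¹ * y, hk, by group⟩
end

section
/- Let Γ be a vertex-transitive reflexive locally-finite relation on V, v ∈ V, and Ω the kernel graph. Then Ω⁻(v) ∩ Γ(v) = {v}. -/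
open Set Pointwise

variable {V : Type*}

/-- Ω⁻(v) ∩ Γ(v) = {v}. -/
theorem stmt18 {V : Type*} (Γ : V → Set V) (hvt : VT Γ) (hr : Refl Γ) (hlf : LocFin Γ)
    (K : V → Set V) (hK : ∀ v, IsKernel Γ v (K v)) (v : V) :
    rev (fun v => Γ v ∩ K v) v ∩ Γ v = {v} := by
  ext x
  simp only [rev, Set.mem_inter_iff, Set.mem_setOf_eq, Set.mem_singleton_iff]
  constructor
  · rintro ⟨⟨hvΓx, hvKx⟩, hxΓv⟩
    have hM := (hK x).1.1.2.2
    have : v ∈ rev Γ x ∩ K x := ⟨hxΓv, hvKx⟩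
    rw [hM] at this
    exact this.symm
  · rintro rfl
    exact ⟨⟨hr x, (hK x).1.1.2.1⟩, hr x⟩
end
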